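/- In a two-stripe circulant TSP instance with gcd(n, a₁, a₂) = 1 and g₁ = gcd(n, a₁), every Hamiltonian cycle in C⟨{a₁, a₂}⟩ uses at least g₁ edges of length a₂. -/

import Mathlib

private lemma walk_prop_along {V : Type*} {G : SimpleGraph V} {β : Type*} (φ : V → β) (c : β) :
    ∀ {x y : V} (p : G.Walk x y),
      (∀ d ∈ p.darts, φ d.toProd.1 = c → φ d.toProd.2 = c) → φ x = c →
      ∀ u ∈ p.support, φ u = c := by
  intro x y p
  induction p with
  | nil => intro _ hx u hu; simp only [SimpleGraph.Walk.support_nil, List.mem_singleton] at hu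
           subst hu; exact hx
  | @cons a b _ h q ih =>
      intro hd hx u hu
      rw [SimpleGraph.Walk.support_cons, List.mem_cons] at hu
      rcases hu with rfl | hu
      · exact hx
      · have hstep : φ b = c :=
          hd ⟨(a, b), h⟩
            (by rw [SimpleGraph.Walk.darts_cons]; exact List.mem_cons_self) hx
        exact ih (fun d hdm => hd d
            (by rw [SimpleGraph.Walk.darts_cons]; exact List.mem_cons_of_mem _ hdm)) hstep u hu

/-- Lower bound for two-stripe circulant TSP: in a (nontrivial) two-stripe instance with
`gcd(n,a₁,a₂) = 1` and `g₁ = gcd(n,a₁) > 1`, every Hamiltonian cycle in `C⟨{a₁,a₂}⟩` uses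
at least `g₁` edges of length `a₂`. -/
theorem stmt_5 (n a₁ a₂ : ℕ) (hn : 0 < n)
    (ha₁ : 1 ≤ a₁) (ha₂ : 1 ≤ a₂) (hne : a₁ ≠ a₂)
    (hb₁ : 2 * a₁ ≤ n) (hb₂ : 2 * a₂ ≤ n)
    (hg : Nat.gcd (Nat.gcd n a₁) a₂ = 1) (hg₁ : 1 < Nat.gcd n a₁)
    (v : ZMod n)
    (w : (SimpleGraph.circulantGraph
        ({(a₁ : ZMod n), (a₂ : ZMod n)} : Set (ZMod n))).Walk v v)
    (hw : w.IsHamiltonianCycle) :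
    Nat.gcd n a₁ ≤
      w.darts.countP (fun d => decide (d.toProd.2 - d.toProd.1 = (a₂ : ZMod n) ∨
        d.toProd.1 - d.toProd.2 = (a₂ : ZMod n))) := by
  set g₁ := Nat.gcd n a₁ with hg₁def
  haveI : NeZero n := ⟨hn.ne'⟩
  haveI : Fact (1 < g₁) := ⟨hg₁⟩
  haveI : NeZero g₁ := ⟨by omega⟩
  let φ : ZMod n →+* ZMod g₁ := ZMod.castHom (Nat.gcd_dvd_left n a₁) (ZMod g₁)
  -- a₁ maps to 0
  have ha₁0 : φ ((a₁ : ℕ) : ZMod n) = 0 := by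
    rw [map_natCast φ a₁, ZMod.natCast_eq_zero_iff]
    exact Nat.gcd_dvd_right n a₁
  -- any dart with φ-change must have length a₂
  have key : ∀ d : (SimpleGraph.circulantGraph
        ({(a₁ : ZMod n), (a₂ : ZMod n)} : Set (ZMod n))).Dart,
      φ d.toProd.1 ≠ φ d.toProd.2 →
      (d.toProd.2 - d.toProd.1 = (a₂ : ZMod n) ∨ d.toProd.1 - d.toProd.2 = (a₂ : ZMod n)) := by
    intro d hne'
    have hadj := d.adj
    simp only [SimpleGraph.circulantGraph, SimpleGraph.fromRel_adj, Set.mem_insert_iff,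
      Set.mem_singleton_iff] at hadj
    obtain ⟨-, (h | h) | (h | h)⟩ := hadj
    · exfalso
      apply hne'
      have h0 : φ d.toProd.1 - φ d.toProd.2 = 0 := by rw [← map_sub, h]; exact ha₁0
      linear_combination h0
    · exact Or.inr h
    · exfalso
      apply hne'
      have h0 : φ d.toProd.2 - φ d.toProd.1 = 0 := by rw [← map_sub, h]; exact ha₁0
      linear_combination -h0
    · exact Or.inl h
  -- existence of a transition dart for every class c
  have exist : ∀ c : ZMod g₁, ∃ d ∈ w.darts, φ d.toProd.1 = c ∧ φ d.toProd.2 ≠ φ d.toProd.1 := by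
    intro c
    by_contra hcon
    push_neg at hcon
    have hall : ∀ d ∈ w.darts, φ d.toProd.1 = c → φ d.toProd.2 = c := by
      intro d hd h1
      exact (hcon d hd h1).trans h1
    have hφcast : ∀ c' : ZMod g₁, φ ((c'.val : ℕ) : ZMod n) = c' := by
      intro c'
      rw [map_natCast φ c'.val, ZMod.natCast_zmod_val]
    set u₀ : ZMod n := ((c.val : ℕ) : ZMod n) with hu₀
    have hu₀mem : u₀ ∈ w.support := hw.mem_support u₀
    have hdropdarts : ∀ d ∈ (w.dropUntil u₀ hu₀mem).darts, d ∈ w.darts := by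
      intro d hd
      have hspec := w.take_spec hu₀mem
      rw [← hspec, SimpleGraph.Walk.darts_append, List.mem_append]
      exact Or.inr hd
    have hφv : φ v = c := by
      have := walk_prop_along (fun x => φ x) c (w.dropUntil u₀ hu₀mem)
        (fun d hd => hall d (hdropdarts d hd)) (hφcast c)
      exact this v (SimpleGraph.Walk.end_mem_support _)
    have hallsupp : ∀ u ∈ w.support, φ u = c :=
      walk_prop_along (fun x => φ x) c w hall hφv
    have hval : φ ((((c+1).val : ℕ)) : ZMod n) = c + 1 := hφcast (c + 1)
    have hne2 : (c + 1 : ZMod g₁) ≠ c := by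
      intro h
      have h1 : (1 : ZMod g₁) = 0 := by linear_combination h
      exact one_ne_zero h1
    exact hne2 (hval ▸ hallsupp _ (hw.mem_support _))
  -- count transition darts
  classical
  set p' : (SimpleGraph.circulantGraph
        ({(a₁ : ZMod n), (a₂ : ZMod n)} : Set (ZMod n))).Dart → Bool :=
    fun d => decide (φ d.toProd.2 ≠ φ d.toProd.1) with hp'
  have hsub : Finset.univ (α := ZMod g₁) ⊆
      ((w.darts.filter p').map (fun d => φ d.toProd.1)).toFinset := by
    intro c _
    rw [List.mem_toFinset, List.mem_map]
    obtain ⟨d, hd, h1, h2⟩ := exist c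
    exact ⟨d, List.mem_filter.mpr ⟨hd, by simp [hp', h2]⟩, h1⟩
  have hcard : g₁ ≤ (w.darts.filter p').length := by
    calc g₁ = Fintype.card (ZMod g₁) := (ZMod.card g₁).symm
      _ = (Finset.univ (α := ZMod g₁)).card := rfl
      _ ≤ ((w.darts.filter p').map (fun d => φ d.toProd.1)).toFinset.card :=
          Finset.card_le_card hsub
      _ ≤ ((w.darts.filter p').map (fun d => φ d.toProd.1)).length :=
          List.toFinset_card_le _
      _ = (w.darts.filter p').length := List.length_map _
  rw [← List.countP_eq_length_filter] at hcard
  refine hcard.trans (List.countP_mono_left ?_)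
  intro d _ hd
  simp only [hp', decide_eq_true_eq] at hd
  exact decide_eq_true_eq.mpr (key d hd.symm)
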